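/- Let $v_{++}, v_{+-}, v_{-+}, v_{--} \in \mathbb{C} \setminus \{0\}$ be nonzero complex numbers such that the angles between $v_{++}$ and $v_{+-}$, between $v_{++}$ and $v_{-+}$, between $v_{--}$ and $v_{+-}$, and between $v_{--}$ and $v_{-+}$ each do not exceed $\theta$ for some $0 \le \theta < \pi/2$. Then $v = v_{++} + v_{+-} + v_{-+} + v_{--} \ne 0$ and $\frac{|v_{++}| + |v_{+-}| + |v_{-+}| + |v_{--}|}{|v|} \le \frac{1}{\cos\theta}$. -/

import Mathlib

set_option maxHeartbeats 1000000

noncomputable def cangle (u v : ℂ) : ℝ :=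
  Real.arccos ((u * (starRingEnd ℂ) v).re / (‖u‖ * ‖v‖))

lemma reLB {θ : ℝ} (hθπ : θ < Real.pi / 2) {u v : ℂ} (hu : u ≠ 0) (hv : v ≠ 0)
    (h : cangle u v ≤ θ) :
    Real.cos θ * (‖u‖ * ‖v‖) ≤ (u * (starRingEnd ℂ) v).re := by
  have hab : 0 < ‖u‖ * ‖v‖ :=
    mul_pos (norm_pos_iff.mpr hu) (norm_pos_iff.mpr hv)
  set t := (u * (starRingEnd ℂ) v).re / (‖u‖ * ‖v‖) with ht
  have habs : |(u * (starRingEnd ℂ) v).re| ≤ ‖u‖ * ‖v‖ := by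
    calc |(u * (starRingEnd ℂ) v).re| ≤ ‖u * (starRingEnd ℂ) v‖ :=
          Complex.abs_re_le_norm _
    _ = ‖u‖ * ‖v‖ := by rw [norm_mul, Complex.norm_conj]
  have ht1 : t ≤ 1 := by rw [ht, div_le_one hab]; exact (abs_le.mp habs).2
  have ht2 : -1 ≤ t := by rw [ht, le_div_iff₀ hab]; linarith [(abs_le.mp habs).1]
  have hcos : Real.cos θ ≤ t := by
    have := Real.cos_le_cos_of_nonneg_of_le_pi (Real.arccos_nonneg t)
      (by linarith [Real.pi_pos]) h
    rwa [Real.cos_arccos ht2 ht1] at this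
  calc Real.cos θ * (‖u‖ * ‖v‖)
      ≤ t * (‖u‖ * ‖v‖) := by nlinarith
    _ = (u * (starRingEnd ℂ) v).re := by rw [ht, div_mul_cancel₀ _ hab.ne']

lemma crossR {k a b d p q p' q' : ℝ} (hk : 0 ≤ k) (ha : 0 ≤ a) (hb : 0 < b) (hd : 0 ≤ d)
    (hpy : p ^ 2 + q ^ 2 = a ^ 2 * b ^ 2) (hpy' : p' ^ 2 + q' ^ 2 = d ^ 2 * b ^ 2)
    (h1 : k * (a * b) ≤ p) (h2 : k * (d * b) ≤ p') :
    (2 * k ^ 2 - 1) * (a * d) * b ^ 2 ≤ p * p' + q * q' := by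
  have hsq1 : (k * (a * b)) ^ 2 ≤ p ^ 2 :=
    pow_le_pow_left₀ (mul_nonneg hk (mul_nonneg ha hb.le)) h1 2
  have hsq2 : (k * (d * b)) ^ 2 ≤ p' ^ 2 :=
    pow_le_pow_left₀ (mul_nonneg hk (mul_nonneg hd hb.le)) h2 2
  have hq1 : q ^ 2 ≤ (1 - k ^ 2) * (a ^ 2 * b ^ 2) := by nlinarith
  have hq2 : q' ^ 2 ≤ (1 - k ^ 2) * (d ^ 2 * b ^ 2) := by nlinarith
  have hpp : k ^ 2 * (a * d * b ^ 2) ≤ p * p' := by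
    calc k ^ 2 * (a * d * b ^ 2) = (k * (a * b)) * (k * (d * b)) := by ring
    _ ≤ p * p' := mul_le_mul h1 h2 (mul_nonneg hk (mul_nonneg hd hb.le))
        (le_trans (mul_nonneg hk (mul_nonneg ha hb.le)) h1)
  rcases eq_or_ne a 0 with haz | haz
  · subst haz
    have hq0 : q = 0 := by nlinarith [sq_nonneg p, sq_nonneg q]
    have hp0 : 0 ≤ p := by nlinarith
    have hp'0 : 0 ≤ p' := le_trans (by positivity) h2
    rw [hq0]
    nlinarith [mul_nonneg hp0 hp'0]
  rcases eq_or_ne d 0 with hdz | hdz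
  · subst hdz
    have hq0 : q' = 0 := by nlinarith [sq_nonneg p', sq_nonneg q']
    have hp'0 : 0 ≤ p' := by nlinarith
    have hp0 : 0 ≤ p := le_trans (by positivity) h1
    rw [hq0]
    nlinarith [mul_nonneg hp0 hp'0]
  have ha0 : 0 < a := lt_of_le_of_ne ha (Ne.symm haz)
  have hd0 : 0 < d := lt_of_le_of_ne hd (Ne.symm hdz)
  have had : 0 < a * d := mul_pos ha0 hd0
  have key : -((1 - k ^ 2) * (a * d * b ^ 2)) ≤ q * q' := by
    have h3 : d ^ 2 * q ^ 2 ≤ d ^ 2 * ((1 - k ^ 2) * (a ^ 2 * b ^ 2)) :=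
      mul_le_mul_of_nonneg_left hq1 (sq_nonneg d)
    have h4 : a ^ 2 * q' ^ 2 ≤ a ^ 2 * ((1 - k ^ 2) * (d ^ 2 * b ^ 2)) :=
      mul_le_mul_of_nonneg_left hq2 (sq_nonneg a)
    have h5 : -(2 * ((1 - k ^ 2) * (a ^ 2 * d ^ 2 * b ^ 2))) ≤ 2 * (a * d) * (q * q') := by
      nlinarith [sq_nonneg (d * q + a * q'), h3, h4]
    have h6 : 2 * (a * d) * (-((1 - k ^ 2) * (a * d * b ^ 2))) ≤ 2 * (a * d) * (q * q') := by
      nlinarith [h5]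
    exact le_of_mul_le_mul_left h6 (by positivity)
  linarith [hpp, key]

lemma cross {k : ℝ} (hk : 0 ≤ k) {x y z : ℂ} (hy : y ≠ 0)
    (h1 : k * (‖x‖ * ‖y‖) ≤ (x * (starRingEnd ℂ) y).re)
    (h2 : k * (‖z‖ * ‖y‖) ≤ (z * (starRingEnd ℂ) y).re) :
    (2 * k ^ 2 - 1) * (‖x‖ * ‖z‖) ≤ (x * (starRingEnd ℂ) z).re := by
  have hb0 : 0 < ‖y‖ := norm_pos_iff.mpr hy
  have ha2 : (‖x‖) ^ 2 = x.re ^ 2 + x.im ^ 2 := by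
    rw [Complex.sq_norm, Complex.normSq_apply]; ring
  have hb2 : (‖y‖) ^ 2 = y.re ^ 2 + y.im ^ 2 := by
    rw [Complex.sq_norm, Complex.normSq_apply]; ring
  have hd2 : (‖z‖) ^ 2 = z.re ^ 2 + z.im ^ 2 := by
    rw [Complex.sq_norm, Complex.normSq_apply]; ring
  have e1 : (x * (starRingEnd ℂ) y).re = x.re * y.re + x.im * y.im := by
    simp [Complex.mul_re]
  have e2 : (z * (starRingEnd ℂ) y).re = z.re * y.re + z.im * y.im := by
    simp [Complex.mul_re]
  have e3 : (‖y‖) ^ 2 * (x * (starRingEnd ℂ) z).re =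
      (x.re * y.re + x.im * y.im) * (z.re * y.re + z.im * y.im) +
      (x.re * y.im - x.im * y.re) * (z.re * y.im - z.im * y.re) := by
    rw [hb2]; simp [Complex.mul_re]; ring
  rw [e1] at h1; rw [e2] at h2
  have hpy : (x.re * y.re + x.im * y.im) ^ 2 + (x.re * y.im - x.im * y.re) ^ 2 =
      (‖x‖) ^ 2 * (‖y‖) ^ 2 := by rw [ha2, hb2]; ring
  have hpy' : (z.re * y.re + z.im * y.im) ^ 2 + (z.re * y.im - z.im * y.re) ^ 2 =
      (‖z‖) ^ 2 * (‖y‖) ^ 2 := by rw [hd2, hb2]; ring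
  have main := crossR hk (norm_nonneg x) hb0 (norm_nonneg z) hpy hpy' h1 h2
  rw [← e3] at main
  nlinarith [main, pow_pos hb0 2]

lemma re_symm (u v : ℂ) : (u * (starRingEnd ℂ) v).re = (v * (starRingEnd ℂ) u).re := by
  simp [Complex.mul_re]; ring

theorem stmt2 (θ : ℝ) (hθ0 : 0 ≤ θ) (hθπ : θ < Real.pi / 2)
    (vpp vpm vmp vmm : ℂ)
    (h1 : vpp ≠ 0) (h2 : vpm ≠ 0) (h3 : vmp ≠ 0) (h4 : vmm ≠ 0)
    (a1 : cangle vpp vpm ≤ θ) (a2 : cangle vpp vmp ≤ θ)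
    (a3 : cangle vmm vpm ≤ θ) (a4 : cangle vmm vmp ≤ θ) :
    vpp + vpm + vmp + vmm ≠ 0 ∧
      (‖vpp‖ + ‖vpm‖ + ‖vmp‖ + ‖vmm‖) /
          ‖vpp + vpm + vmp + vmm‖ ≤ 1 / Real.cos θ := by
  set k := Real.cos θ with hkdef
  have hk0 : 0 < k := Real.cos_pos_of_mem_Ioo ⟨by linarith [Real.pi_pos], hθπ⟩
  have hk1 : k ≤ 1 := Real.cos_le_one θ
  set a := ‖vpp‖ with hA
  set b := ‖vpm‖ with hB
  set c := ‖vmp‖ with hC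
  set d := ‖vmm‖ with hD
  have ha0 : 0 < a := norm_pos_iff.mpr h1
  have hb0 : 0 < b := norm_pos_iff.mpr h2
  have hc0 : 0 < c := norm_pos_iff.mpr h3
  have hd0 : 0 < d := norm_pos_iff.mpr h4
  have r12 : k * (a * b) ≤ (vpp * (starRingEnd ℂ) vpm).re := reLB hθπ h1 h2 a1
  have r13 : k * (a * c) ≤ (vpp * (starRingEnd ℂ) vmp).re := reLB hθπ h1 h3 a2
  have r42 : k * (d * b) ≤ (vmm * (starRingEnd ℂ) vpm).re := reLB hθπ h4 h2 a3
  have r43 : k * (d * c) ≤ (vmm * (starRingEnd ℂ) vmp).re := reLB hθπ h4 h3 a4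
  -- cross terms
  have r14 : (2 * k ^ 2 - 1) * (a * d) ≤ (vpp * (starRingEnd ℂ) vmm).re :=
    cross hk0.le h2 r12 r42
  have r23 : (2 * k ^ 2 - 1) * (b * c) ≤ (vpm * (starRingEnd ℂ) vmp).re := by
    have h12' : k * (b * a) ≤ (vpm * (starRingEnd ℂ) vpp).re := by
      rw [re_symm]; linarith [r12]
    have h13' : k * (c * a) ≤ (vmp * (starRingEnd ℂ) vpp).re := by
      rw [re_symm]; linarith [r13]
    exact cross hk0.le h1 h12' h13'
  -- expansion of |v|^2
  have h1k2 : 0 ≤ 1 - k ^ 2 := by nlinarith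
  have hexp : (‖vpp + vpm + vmp + vmm‖) ^ 2 =
      a ^ 2 + b ^ 2 + c ^ 2 + d ^ 2 +
      2 * ((vpp * (starRingEnd ℂ) vpm).re + (vpp * (starRingEnd ℂ) vmp).re +
           (vpp * (starRingEnd ℂ) vmm).re + (vpm * (starRingEnd ℂ) vmp).re +
           (vmm * (starRingEnd ℂ) vpm).re + (vmm * (starRingEnd ℂ) vmp).re) := by
    have e : ∀ w1 w2 : ℂ, (w1 * (starRingEnd ℂ) w2).re = w1.re * w2.re + w1.im * w2.im := by
      intro w1 w2; simp [Complex.mul_re]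
    rw [Complex.sq_norm, Complex.normSq_apply]
    rw [hA, hB, hC, hD]
    simp only [Complex.sq_norm, Complex.normSq_apply, Complex.add_re, Complex.add_im, e]
    ring
  have hge : k * (a + b + c + d) ≤ ‖vpp + vpm + vmp + vmm‖ := by
    have hsum : a ^ 2 + b ^ 2 + c ^ 2 + d ^ 2 +
        2 * (k * (a * b) + k * (a * c) + (2 * k ^ 2 - 1) * (a * d) +
          (2 * k ^ 2 - 1) * (b * c) + k * (d * b) + k * (d * c)) ≤
        (‖vpp + vpm + vmp + vmm‖) ^ 2 := by
      rw [hexp]; linarith [r12, r13, r42, r43, r14, r23]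
    have hsq : (k * (a + b + c + d)) ^ 2 ≤ (‖vpp + vpm + vmp + vmm‖) ^ 2 := by
      have t1 : 0 ≤ (1 - k ^ 2) * (a - d) ^ 2 := mul_nonneg h1k2 (sq_nonneg _)
      have t2 : 0 ≤ (1 - k ^ 2) * (b - c) ^ 2 := mul_nonneg h1k2 (sq_nonneg _)
      have t3 : 0 ≤ k * (1 - k) * ((a + d) * (b + c)) :=
        mul_nonneg (mul_nonneg hk0.le (by linarith))
          (mul_nonneg (by linarith) (by linarith))
      nlinarith [hsum, t1, t2, t3]
    have hvnn : 0 ≤ ‖vpp + vpm + vmp + vmm‖ := norm_nonneg _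
    have hknn : 0 ≤ k * (a + b + c + d) := by positivity
    nlinarith [hsq, hvnn, hknn]
  have hvpos : 0 < ‖vpp + vpm + vmp + vmm‖ := by
    have : 0 < k * (a + b + c + d) := by positivity
    linarith
  constructor
  · intro h0
    rw [h0] at hvpos
    simp at hvpos
  · rw [div_le_div_iff₀ hvpos hk0]
    calc (a + b + c + d) * k = k * (a + b + c + d) := by ring
    _ ≤ ‖vpp + vpm + vmp + vmm‖ := hge
    _ = 1 * ‖vpp + vpm + vmp + vmm‖ := by ring
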